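/- (Theorem 3, Part 1: invariant feasible set) Consider the closed-loop system under the shift and optimizer decrease conditions, with B̂_x and B̂_u positive definite recentered relaxed barrier functions (relaxation parameter δ > 0) for the compact polytopes X = {x : C_x x ≤ d_x} and U = {u : C_u u ≤ d_u}, with P*_uc a symmetric positive semidefinite DARE solution for (A,B,Q,R), and assume the closed-loop state trajectory satisfies x(k) → 0. Define β̄_x(δ) := min over i and ξ of {B̂_x(ξ) : C_xⁱξ = d_xⁱ}, β̄_u(δ) := min over j and v of {B̂_u(v) : C_uʲv = d_uʲ}, β̄(δ) := min{β̄_x(δ), β̄_u(δ)}, and Ẑ_N(δ) := {(U,x) ∈ ℝ^{Nm}×ℝⁿ : Ĵ_N(U,x) − xᵀP*_uc x ≤ ε·β̄(δ)}. Then for every initialization (U₀,x₀) ∈ Ẑ_N(δ) and every sequence i_T(k) ∈ ℕ, the closed-loop trajectories satisfy x(k) ∈ X and u(k) = Π₀U(k) ∈ U for all k ∈ ℕ. -/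

import Mathlib

open Matrix

/-- Predicted states: `x₀(U,x) = x`, `x_{k+1}(U,x) = A x_k(U,x) + B u_k`. -/
noncomputable def predState {n m N : ℕ} (A : Matrix (Fin n) (Fin n) ℝ)
    (B : Matrix (Fin n) (Fin m) ℝ) (u : Fin N → Fin m → ℝ) (x : Fin n → ℝ) :
    ℕ → Fin n → ℝ
  | 0 => x
  | k + 1 => A.mulVec (predState A B u x k) +
      (if h : k < N then B.mulVec (u ⟨k, h⟩) else 0)

/-- The relaxed stage cost `ℓ̂(x,u) = xᵀQx + uᵀRu + ε B̂_x(x) + ε B̂_u(u)`. -/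
noncomputable def stageCost {n m : ℕ} (Q : Matrix (Fin n) (Fin n) ℝ)
    (R : Matrix (Fin m) (Fin m) ℝ) (ε : ℝ)
    (Bx : (Fin n → ℝ) → ℝ) (Bu : (Fin m → ℝ) → ℝ)
    (x : Fin n → ℝ) (u : Fin m → ℝ) : ℝ :=
  x ⬝ᵥ Q.mulVec x + u ⬝ᵥ R.mulVec u + ε * Bx x + ε * Bu u

/-- The relaxed barrier function based MPC cost. -/
noncomputable def mpcCost {n m N : ℕ} (A : Matrix (Fin n) (Fin n) ℝ)
    (B : Matrix (Fin n) (Fin m) ℝ) (Q : Matrix (Fin n) (Fin n) ℝ)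
    (R : Matrix (Fin m) (Fin m) ℝ) (P : Matrix (Fin n) (Fin n) ℝ) (ε : ℝ)
    (Bx : (Fin n → ℝ) → ℝ) (Bu : (Fin m → ℝ) → ℝ)
    (u : Fin N → Fin m → ℝ) (x : Fin n → ℝ) : ℝ :=
  (∑ k : Fin N, stageCost Q R ε Bx Bu (predState A B u x k) (u k)) +
    (predState A B u x N) ⬝ᵥ P.mulVec (predState A B u x N)

/-- The shift operator `Ψ_s(U,x) = (u₁,…,u_{N−1}, k_f(U,x))`. -/
def shiftOp {n m N : ℕ} (kf : (Fin N → Fin m → ℝ) → (Fin n → ℝ) → Fin m → ℝ)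
    (u : Fin N → Fin m → ℝ) (x : Fin n → ℝ) : Fin N → Fin m → ℝ :=
  fun i => if h : (i : ℕ) + 1 < N then u ⟨(i : ℕ) + 1, h⟩ else kf u x

/-- The iterated optimization operator. -/
def PhiIter {n m N : ℕ} [NeZero N] (A : Matrix (Fin n) (Fin n) ℝ)
    (B : Matrix (Fin n) (Fin m) ℝ)
    (kf : (Fin N → Fin m → ℝ) → (Fin n → ℝ) → Fin m → ℝ)
    (Ψo : (Fin N → Fin m → ℝ) → (Fin n → ℝ) → Fin N → Fin m → ℝ) :
    ℕ → (Fin N → Fin m → ℝ) → (Fin n → ℝ) → Fin N → Fin m → ℝ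
  | 0, u, x => shiftOp kf u x
  | i + 1, u, x => Ψo (PhiIter A B kf Ψo i u x) (A.mulVec x + B.mulVec (u 0))

/-- The closed-loop system `x(k+1) = Ax(k) + BΠ₀U(k)`, `U(k+1) = Φ^{i_T(k)}(U(k),x(k))`. -/
def cloop {n m N : ℕ} [NeZero N] (A : Matrix (Fin n) (Fin n) ℝ)
    (B : Matrix (Fin n) (Fin m) ℝ)
    (kf : (Fin N → Fin m → ℝ) → (Fin n → ℝ) → Fin m → ℝ)
    (Ψo : (Fin N → Fin m → ℝ) → (Fin n → ℝ) → Fin N → Fin m → ℝ)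
    (iT : ℕ → ℕ) (U0 : Fin N → Fin m → ℝ) (x0 : Fin n → ℝ) :
    ℕ → (Fin N → Fin m → ℝ) × (Fin n → ℝ)
  | 0 => (U0, x0)
  | k + 1 =>
    (PhiIter A B kf Ψo (iT k) (cloop A B kf Ψo iT U0 x0 k).1 (cloop A B kf Ψo iT U0 x0 k).2,
      A.mulVec (cloop A B kf Ψo iT U0 x0 k).2 + B.mulVec ((cloop A B kf Ψo iT U0 x0 k).1 0))



lemma posdef_of {p : ℕ} (S : Matrix (Fin p) (Fin p) ℝ) (hs : S.IsSymm)
    (h : ∀ v : Fin p → ℝ, v ≠ 0 → 0 < v ⬝ᵥ S *ᵥ v) : S.PosDef := by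
  refine Matrix.PosDef.of_dotProduct_mulVec_pos ?_ ?_
  · rw [Matrix.IsHermitian]
    ext i j
    simpa using congrFun (congrFun hs i) j
  · intro v hv
    simpa using h v hv

lemma adj_dot {p q : ℕ} (M : Matrix (Fin p) (Fin q) ℝ) (v : Fin p → ℝ) (w : Fin q → ℝ) :
    v ⬝ᵥ M *ᵥ w = (Mᵀ *ᵥ v) ⬝ᵥ w := by
  rw [Matrix.dotProduct_mulVec, Matrix.mulVec_transpose]

lemma adj_dot' {p q : ℕ} (M : Matrix (Fin p) (Fin q) ℝ) (v : Fin q → ℝ) (w : Fin p → ℝ) :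
    (M *ᵥ v) ⬝ᵥ w = v ⬝ᵥ (Mᵀ *ᵥ w) := by
  rw [dotProduct_comm, adj_dot, dotProduct_comm]

lemma bellman {n m : ℕ}
    (A : Matrix (Fin n) (Fin n) ℝ) (B : Matrix (Fin n) (Fin m) ℝ)
    (Q : Matrix (Fin n) (Fin n) ℝ) (R : Matrix (Fin m) (Fin m) ℝ)
    (Puc : Matrix (Fin n) (Fin n) ℝ)
    (hRsymm : R.IsSymm) (hRpd : ∀ u : Fin m → ℝ, u ≠ 0 → 0 < u ⬝ᵥ R.mulVec u)
    (hPucsymm : Puc.IsSymm) (hPucpsd : ∀ x : Fin n → ℝ, 0 ≤ x ⬝ᵥ Puc.mulVec x)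
    (hDARE : Puc = Aᵀ * Puc * A -
      Aᵀ * Puc * B * (R + Bᵀ * Puc * B)⁻¹ * Bᵀ * Puc * A + Q)
    (x : Fin n → ℝ) (u : Fin m → ℝ) :
    x ⬝ᵥ Puc.mulVec x ≤ x ⬝ᵥ Q.mulVec x + u ⬝ᵥ R.mulVec u +
      (A.mulVec x + B.mulVec u) ⬝ᵥ Puc.mulVec (A.mulVec x + B.mulVec u) := by
  set S : Matrix (Fin m) (Fin m) ℝ := R + Bᵀ * Puc * B with hS
  have h4 : (B *ᵥ u) ⬝ᵥ Puc *ᵥ (B *ᵥ u) = u ⬝ᵥ (Bᵀ * Puc * B) *ᵥ u := by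
    rw [adj_dot', Matrix.mulVec_mulVec, Matrix.mulVec_mulVec]
  have hSform : u ⬝ᵥ S *ᵥ u = u ⬝ᵥ R *ᵥ u + u ⬝ᵥ (Bᵀ * Puc * B) *ᵥ u := by
    rw [hS, Matrix.add_mulVec, dotProduct_add]
  have hSsymm : S.IsSymm := by
    rw [hS, Matrix.IsSymm, Matrix.transpose_add, hRsymm.eq]
    congr 1
    rw [Matrix.transpose_mul, Matrix.transpose_mul, Matrix.transpose_transpose,
      hPucsymm.eq, Matrix.mul_assoc]
  have hSpd : ∀ v : Fin m → ℝ, v ≠ 0 → 0 < v ⬝ᵥ S *ᵥ v := by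
    intro v hv
    have e4 : (B *ᵥ v) ⬝ᵥ Puc *ᵥ (B *ᵥ v) = v ⬝ᵥ (Bᵀ * Puc * B) *ᵥ v := by
      rw [adj_dot', Matrix.mulVec_mulVec, Matrix.mulVec_mulVec]
    have e5 : v ⬝ᵥ S *ᵥ v = v ⬝ᵥ R *ᵥ v + v ⬝ᵥ (Bᵀ * Puc * B) *ᵥ v := by
      rw [hS, Matrix.add_mulVec, dotProduct_add]
    have := hRpd v hv
    have := hPucpsd (B *ᵥ v)
    rw [e5, ← e4]; linarith
  have hSdet : IsUnit S.det := (posdef_of S hSsymm hSpd).det_pos.ne'.isUnit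
  have hSinv : S * S⁻¹ = 1 := Matrix.mul_nonsing_inv S hSdet
  have hSinv' : S⁻¹ * S = 1 := Matrix.nonsing_inv_mul S hSdet
  have hSinvsymm : S⁻¹ᵀ = S⁻¹ := by rw [Matrix.transpose_nonsing_inv, hSsymm.eq]
  obtain ⟨b, hb⟩ : ∃ b, (Bᵀ * Puc * A) *ᵥ x = b := ⟨_, rfl⟩
  obtain ⟨w, hw⟩ : ∃ w, u + S⁻¹ *ᵥ b = w := ⟨_, rfl⟩
  have hT : (Aᵀ * Puc * B)ᵀ = Bᵀ * Puc * A := by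
    rw [Matrix.transpose_mul, Matrix.transpose_mul, Matrix.transpose_transpose,
      hPucsymm.eq, Matrix.mul_assoc]
  have cross : ∀ z : Fin m → ℝ, x ⬝ᵥ (Aᵀ * Puc * B) *ᵥ z = b ⬝ᵥ z := by
    intro z
    rw [adj_dot, hT, hb]
  have expandY : (A *ᵥ x + B *ᵥ u) ⬝ᵥ Puc *ᵥ (A *ᵥ x + B *ᵥ u)
      = x ⬝ᵥ (Aᵀ * Puc * A) *ᵥ x + 2 * (b ⬝ᵥ u) + u ⬝ᵥ (Bᵀ * Puc * B) *ᵥ u := by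
    rw [Matrix.mulVec_add, dotProduct_add, add_dotProduct, add_dotProduct]
    have h1 : (A *ᵥ x) ⬝ᵥ Puc *ᵥ (A *ᵥ x) = x ⬝ᵥ (Aᵀ * Puc * A) *ᵥ x := by
      rw [adj_dot', Matrix.mulVec_mulVec, Matrix.mulVec_mulVec]
    have h2 : (A *ᵥ x) ⬝ᵥ Puc *ᵥ (B *ᵥ u) = b ⬝ᵥ u := by
      rw [adj_dot', Matrix.mulVec_mulVec, Matrix.mulVec_mulVec, adj_dot, hT, hb]
    have h3 : (B *ᵥ u) ⬝ᵥ Puc *ᵥ (A *ᵥ x) = b ⬝ᵥ u := by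
      rw [adj_dot', Matrix.mulVec_mulVec, Matrix.mulVec_mulVec, hb, dotProduct_comm]
    rw [h1, h2, h3, h4]; ring
  have expandX : x ⬝ᵥ Puc *ᵥ x
      = x ⬝ᵥ (Aᵀ * Puc * A) *ᵥ x - b ⬝ᵥ S⁻¹ *ᵥ b + x ⬝ᵥ Q *ᵥ x := by
    conv_lhs => rw [hDARE]
    rw [Matrix.add_mulVec, Matrix.sub_mulVec, dotProduct_add, dotProduct_sub]
    congr 2
    have : Aᵀ * Puc * B * S⁻¹ * Bᵀ * Puc * A = (Aᵀ * Puc * B) * (S⁻¹ * (Bᵀ * Puc * A)) := by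
      simp only [Matrix.mul_assoc]
    rw [this, ← Matrix.mulVec_mulVec, cross, ← Matrix.mulVec_mulVec, hb]
  have expandW : w ⬝ᵥ S *ᵥ w
      = u ⬝ᵥ S *ᵥ u + 2 * (b ⬝ᵥ u) + b ⬝ᵥ S⁻¹ *ᵥ b := by
    rw [← hw, Matrix.mulVec_add, dotProduct_add, add_dotProduct, add_dotProduct]
    have e2 : u ⬝ᵥ S *ᵥ (S⁻¹ *ᵥ b) = u ⬝ᵥ b := by
      rw [Matrix.mulVec_mulVec, hSinv, Matrix.one_mulVec]
    have e3 : (S⁻¹ *ᵥ b) ⬝ᵥ S *ᵥ u = b ⬝ᵥ u := by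
      rw [adj_dot', hSinvsymm, Matrix.mulVec_mulVec, hSinv', Matrix.one_mulVec]
    have e4 : (S⁻¹ *ᵥ b) ⬝ᵥ S *ᵥ (S⁻¹ *ᵥ b) = b ⬝ᵥ S⁻¹ *ᵥ b := by
      rw [Matrix.mulVec_mulVec, hSinv, Matrix.one_mulVec, adj_dot', hSinvsymm]
    rw [e2, e3, e4, dotProduct_comm u b]; ring
  have hwpos : 0 ≤ w ⬝ᵥ S *ᵥ w := by
    by_cases hv : w = 0
    · simp [hv]
    · exact (hSpd w hv).le
  linarith [hwpos, expandW, expandY, expandX, hSform]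


section Aux

lemma barrier_constraint {p q : ℕ} (C : Matrix (Fin q) (Fin p) ℝ) (d : Fin q → ℝ)
    (f : (Fin p → ℝ) → ℝ) (hf0 : f 0 = 0) (hfpos : ∀ v, v ≠ 0 → 0 < f v)
    (hconv : ConvexOn ℝ Set.univ f) (hd : ∀ i, 0 < d i) (β : ℝ)
    (hβ : β = sInf {t : ℝ | ∃ (i : Fin q) (ξ : Fin p → ℝ), C.mulVec ξ i = d i ∧ t = f ξ})
    (x : Fin p → ℝ) (hx : f x ≤ β) : C.mulVec x ≤ d := by
  by_contra h
  rw [Pi.le_def] at h; push_neg at h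
  obtain ⟨i, hi⟩ := h
  have hfnn : ∀ v, 0 ≤ f v := by
    intro v
    by_cases hv : v = 0
    · simp [hv, hf0]
    · exact (hfpos v hv).le
  have hxne : x ≠ 0 := by
    rintro rfl
    rw [Matrix.mulVec_zero] at hi
    exact absurd (hd i) (not_lt.2 hi.le)
  have hc : 0 < C.mulVec x i := (hd i).trans hi
  have h0 : 0 < d i / C.mulVec x i := div_pos (hd i) hc
  have h1 : d i / C.mulVec x i < 1 := (div_lt_one hc).2 hi
  set lam := d i / C.mulVec x i with hlam
  have hmem : f (lam • x) ∈
      {t : ℝ | ∃ (i : Fin q) (ξ : Fin p → ℝ), C.mulVec ξ i = d i ∧ t = f ξ} := by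
    refine ⟨i, lam • x, ?_, rfl⟩
    rw [Matrix.mulVec_smul]
    simp only [Pi.smul_apply, smul_eq_mul, hlam]
    field_simp
  have hbdd : BddBelow {t : ℝ | ∃ (i : Fin q) (ξ : Fin p → ℝ), C.mulVec ξ i = d i ∧ t = f ξ} := by
    refine ⟨0, fun t ht => ?_⟩
    obtain ⟨_, ξ, _, rfl⟩ := ht
    exact hfnn ξ
  have h2 : β ≤ f (lam • x) := hβ ▸ csInf_le hbdd hmem
  have h3 : f (lam • x) ≤ lam * f x := by
    have := hconv.2 (Set.mem_univ x) (Set.mem_univ 0) h0.le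
      (by linarith : (0:ℝ) ≤ 1 - lam) (by ring)
    simpa [hf0, smul_zero, smul_eq_mul] using this
  have h4 : 0 < f x := hfpos x hxne
  nlinarith

lemma quadform_tendsto {p : ℕ} (M : Matrix (Fin p) (Fin p) ℝ) (f : ℕ → Fin p → ℝ)
    (hf : Filter.Tendsto f Filter.atTop (nhds 0)) :
    Filter.Tendsto (fun k => f k ⬝ᵥ M *ᵥ f k) Filter.atTop (nhds 0) := by
  have hc : Continuous fun v : Fin p → ℝ => v ⬝ᵥ M *ᵥ v := by
    simp only [dotProduct, Matrix.mulVec]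
    refine continuous_finset_sum _ fun i _ => (continuous_apply i).mul ?_
    exact continuous_finset_sum _ fun j _ => continuous_const.mul (continuous_apply j)
  have := (hc.tendsto 0).comp hf
  simpa [Function.comp_def] using this

end Aux

/-- (Theorem 3, Part 1) If the initialization `(U₀,x₀)` lies in the sublevel set
`Ẑ_N(δ) = {(U,x) : Ĵ_N(U,x) − xᵀP*_uc x ≤ ε β̄(δ)}`, where `β̄(δ)` is the smallest value
attained by the relaxed barrier functions on the boundaries of the constraint sets, then
the closed-loop trajectories satisfy the state and input constraints for all times. -/
theorem invariant_feasible_set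
    {n m N qx qu : ℕ} [NeZero N]
    (A : Matrix (Fin n) (Fin n) ℝ) (B : Matrix (Fin n) (Fin m) ℝ)
    (Q : Matrix (Fin n) (Fin n) ℝ) (R : Matrix (Fin m) (Fin m) ℝ)
    (P Puc : Matrix (Fin n) (Fin n) ℝ) (ε : ℝ) (hε : 0 < ε)
    (Cx : Matrix (Fin qx) (Fin n) ℝ) (dx : Fin qx → ℝ)
    (Cu : Matrix (Fin qu) (Fin m) ℝ) (du : Fin qu → ℝ)
    (Bx : (Fin n → ℝ) → ℝ) (Bu : (Fin m → ℝ) → ℝ)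
    (kf : (Fin N → Fin m → ℝ) → (Fin n → ℝ) → Fin m → ℝ)
    (Ψo : (Fin N → Fin m → ℝ) → (Fin n → ℝ) → Fin N → Fin m → ℝ)
    (γ : (Fin N → Fin m → ℝ) → (Fin n → ℝ) → ℝ)
    (iT : ℕ → ℕ) (U0 : Fin N → Fin m → ℝ) (x0 : Fin n → ℝ)
    (hQsymm : Q.IsSymm) (hQpsd : ∀ x : Fin n → ℝ, 0 ≤ x ⬝ᵥ Q.mulVec x)
    (hRsymm : R.IsSymm) (hRpd : ∀ u : Fin m → ℝ, u ≠ 0 → 0 < u ⬝ᵥ R.mulVec u)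
    (hPsymm : P.IsSymm) (hPpd : ∀ x : Fin n → ℝ, x ≠ 0 → 0 < x ⬝ᵥ P.mulVec x)
    (hdx : ∀ i, 0 < dx i) (hdu : ∀ j, 0 < du j)
    (hXcompact : IsCompact {x : Fin n → ℝ | Cx.mulVec x ≤ dx})
    (hUcompact : IsCompact {u : Fin m → ℝ | Cu.mulVec u ≤ du})
    (hBxcont : Continuous Bx) (hBx0 : Bx 0 = 0)
    (hBxpos : ∀ x : Fin n → ℝ, x ≠ 0 → 0 < Bx x)
    (hBxconv : ConvexOn ℝ Set.univ Bx)
    (hBxru : Filter.Tendsto Bx (Filter.cocompact _) Filter.atTop)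
    (hBucont : Continuous Bu) (hBu0 : Bu 0 = 0)
    (hBupos : ∀ u : Fin m → ℝ, u ≠ 0 → 0 < Bu u)
    (hBuconv : ConvexOn ℝ Set.univ Bu)
    (hBuru : Filter.Tendsto Bu (Filter.cocompact _) Filter.atTop)
    (hshift : ∀ (u : Fin N → Fin m → ℝ) (x : Fin n → ℝ),
      mpcCost A B Q R P ε Bx Bu (shiftOp kf u x) (A.mulVec x + B.mulVec (u 0)) -
          mpcCost A B Q R P ε Bx Bu u x ≤ -(stageCost Q R ε Bx Bu x (u 0)))
    (hopt : ∀ (u : Fin N → Fin m → ℝ) (x : Fin n → ℝ),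
      mpcCost A B Q R P ε Bx Bu (Ψo u x) x - mpcCost A B Q R P ε Bx Bu u x ≤ -(γ u x))
    (hγnonneg : ∀ (u : Fin N → Fin m → ℝ) (x : Fin n → ℝ), 0 ≤ γ u x)
    (hPucsymm : Puc.IsSymm) (hPucpsd : ∀ x : Fin n → ℝ, 0 ≤ x ⬝ᵥ Puc.mulVec x)
    (hDARE : Puc = Aᵀ * Puc * A -
      Aᵀ * Puc * B * (R + Bᵀ * Puc * B)⁻¹ * Bᵀ * Puc * A + Q)
    (hxconv : Filter.Tendsto (fun k => (cloop A B kf Ψo iT U0 x0 k).2)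
      Filter.atTop (nhds 0)) :
    ∀ βx βu βbar : ℝ,
      βx = sInf {t : ℝ | ∃ (i : Fin qx) (ξ : Fin n → ℝ),
        Cx.mulVec ξ i = dx i ∧ t = Bx ξ} →
      βu = sInf {t : ℝ | ∃ (j : Fin qu) (v : Fin m → ℝ),
        Cu.mulVec v j = du j ∧ t = Bu v} →
      βbar = min βx βu →
      mpcCost A B Q R P ε Bx Bu U0 x0 - x0 ⬝ᵥ Puc.mulVec x0 ≤ ε * βbar →
      ∀ k : ℕ,
        Cx.mulVec (cloop A B kf Ψo iT U0 x0 k).2 ≤ dx ∧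
        Cu.mulVec ((cloop A B kf Ψo iT U0 x0 k).1 0) ≤ du := by
  
  intro βx βu βbar hβx hβu hβbar hinit
  -- abbreviations
  set J : (Fin N → Fin m → ℝ) → (Fin n → ℝ) → ℝ := mpcCost A B Q R P ε Bx Bu with hJ
  set traj : ℕ → (Fin N → Fin m → ℝ) × (Fin n → ℝ) := cloop A B kf Ψo iT U0 x0 with htraj
  -- nonnegativity facts
  have hBxnn : ∀ x : Fin n → ℝ, 0 ≤ Bx x := by
    intro x; by_cases hx : x = 0
    · simp [hx, hBx0]
    · exact (hBxpos x hx).le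
  have hBunn : ∀ u : Fin m → ℝ, 0 ≤ Bu u := by
    intro u; by_cases hu : u = 0
    · simp [hu, hBu0]
    · exact (hBupos u hu).le
  have hRnn : ∀ u : Fin m → ℝ, 0 ≤ u ⬝ᵥ R.mulVec u := by
    intro u; by_cases hu : u = 0
    · simp [hu]
    · exact (hRpd u hu).le
  have hPnn : ∀ x : Fin n → ℝ, 0 ≤ x ⬝ᵥ P.mulVec x := by
    intro x; by_cases hx : x = 0
    · simp [hx]
    · exact (hPpd x hx).le
  have hstage_ge : ∀ (x : Fin n → ℝ) (u : Fin m → ℝ),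
      ε * Bx x + ε * Bu u ≤ stageCost Q R ε Bx Bu x u := by
    intro x u
    have := hQpsd x
    have := hRnn u
    simp only [stageCost]
    linarith
  have hstage_nn : ∀ (x : Fin n → ℝ) (u : Fin m → ℝ), 0 ≤ stageCost Q R ε Bx Bu x u := by
    intro x u
    have h1 := hstage_ge x u
    have h2 : 0 ≤ ε * Bx x := mul_nonneg hε.le (hBxnn x)
    have h3 : 0 ≤ ε * Bu u := mul_nonneg hε.le (hBunn u)
    linarith
  have hJnn : ∀ (u : Fin N → Fin m → ℝ) (x : Fin n → ℝ), 0 ≤ J u x := by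
    intro u x
    have h1 : 0 ≤ ∑ k : Fin N, stageCost Q R ε Bx Bu (predState A B u x k) (u k) :=
      Finset.sum_nonneg fun k _ => hstage_nn _ _
    have h2 := hPnn (predState A B u x N)
    rw [hJ]
    simp only [mpcCost]
    linarith
  have hJ_ge : ∀ (u : Fin N → Fin m → ℝ) (x : Fin n → ℝ),
      ε * Bx x + ε * Bu (u 0) ≤ J u x := by
    intro u x
    have h1 : stageCost Q R ε Bx Bu (predState A B u x ((0 : Fin N) : ℕ)) (u 0) ≤
        ∑ k : Fin N, stageCost Q R ε Bx Bu (predState A B u x k) (u k) :=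
      Finset.single_le_sum (f := fun k : Fin N =>
        stageCost Q R ε Bx Bu (predState A B u x k) (u k))
        (fun k _ => hstage_nn _ _) (Finset.mem_univ 0)
    have h0 : predState A B u x ((0 : Fin N) : ℕ) = x := by
      simp [predState]
    rw [h0] at h1
    have h2 := hPnn (predState A B u x N)
    have h3 := hstage_ge x (u 0)
    rw [hJ]
    simp only [mpcCost]
    linarith
  -- optimizer iterates only decrease the cost
  have hiter : ∀ (i : ℕ) (u : Fin N → Fin m → ℝ) (x : Fin n → ℝ),
      J (PhiIter A B kf Ψo i u x) (A.mulVec x + B.mulVec (u 0)) ≤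
        J (shiftOp kf u x) (A.mulVec x + B.mulVec (u 0)) := by
    intro i u x
    induction i with
    | zero => simp [PhiIter]
    | succ i ih =>
      have h1 := hopt (PhiIter A B kf Ψo i u x) (A.mulVec x + B.mulVec (u 0))
      have h2 := hγnonneg (PhiIter A B kf Ψo i u x) (A.mulVec x + B.mulVec (u 0))
      simp only [PhiIter]
      rw [hJ] at *
      linarith
  -- the Lyapunov-like function
  set W : ℕ → ℝ := fun k => J (traj k).1 (traj k).2 -
    (traj k).2 ⬝ᵥ Puc.mulVec (traj k).2 with hW
  have hx1 : ∀ k, (traj (k+1)).2 = A.mulVec (traj k).2 + B.mulVec ((traj k).1 0) := by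
    intro k; rw [htraj]; rfl
  have hU1 : ∀ k, (traj (k+1)).1 = PhiIter A B kf Ψo (iT k) (traj k).1 (traj k).2 := by
    intro k; rw [htraj]; rfl
  have hstep : ∀ k, W (k+1) + (ε * Bx (traj k).2 + ε * Bu ((traj k).1 0)) ≤ W k := by
    intro k
    have h1 := hiter (iT k) (traj k).1 (traj k).2
    have h2 := hshift (traj k).1 (traj k).2
    have h3 := bellman A B Q R Puc hRsymm hRpd hPucsymm hPucpsd hDARE
      (traj k).2 ((traj k).1 0)
    rw [hW]
    simp only [hx1, hU1]
    rw [hJ] at *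
    simp only [stageCost] at h2
    linarith
  have hdecr : ∀ k, W (k+1) ≤ W k := by
    intro k
    have h1 := hstep k
    have h2 : 0 ≤ ε * Bx (traj k).2 := mul_nonneg hε.le (hBxnn _)
    have h3 : 0 ≤ ε * Bu ((traj k).1 0) := mul_nonneg hε.le (hBunn _)
    linarith
  have hmono : ∀ k l, k ≤ l → W l ≤ W k := by
    intro k l hkl
    induction l, hkl using Nat.le_induction with
    | base => exact le_refl _
    | succ l hkl ih => exact (hdecr l).trans ih
  have hW0 : W 0 ≤ ε * βbar := by
    rw [hW]
    simpa [htraj, cloop, hJ] using hinit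
  -- key bound via the limit x(k) → 0
  have hq : Filter.Tendsto (fun K => (traj K).2 ⬝ᵥ Puc.mulVec (traj K).2)
      Filter.atTop (nhds 0) := quadform_tendsto Puc _ hxconv
  have hkey : ∀ k, ε * Bx (traj k).2 + ε * Bu ((traj k).1 0) ≤ ε * βbar := by
    intro k
    have ht : Filter.Tendsto
        (fun K => ε * βbar + (traj K).2 ⬝ᵥ Puc.mulVec (traj K).2)
        Filter.atTop (nhds (ε * βbar)) := by
      simpa using (tendsto_const_nhds.add hq)
    refine ge_of_tendsto ht ?_
    filter_upwards [Filter.eventually_ge_atTop (k+1)] with K hK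
    have h5 := hstep k
    have h6 := hmono (k+1) K hK
    have h7 := hmono 0 k (Nat.zero_le k)
    have h8 := hJnn (traj K).1 (traj K).2
    have h9 : W K = J (traj K).1 (traj K).2 - (traj K).2 ⬝ᵥ Puc.mulVec (traj K).2 := rfl
    linarith
  -- from the bound on the barriers to constraint satisfaction
  intro k
  have hk := hkey k
  have hBxk : Bx (traj k).2 ≤ βbar := by
    have h1 : 0 ≤ ε * Bu ((traj k).1 0) := mul_nonneg hε.le (hBunn _)
    have h2 : ε * Bx (traj k).2 ≤ ε * βbar := by linarith
    exact le_of_mul_le_mul_left (by linarith) hε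
  have hBuk : Bu ((traj k).1 0) ≤ βbar := by
    have h1 : 0 ≤ ε * Bx (traj k).2 := mul_nonneg hε.le (hBxnn _)
    exact le_of_mul_le_mul_left (by linarith) hε
  constructor
  · exact barrier_constraint Cx dx Bx hBx0 hBxpos hBxconv hdx βx hβx (traj k).2
      (hBxk.trans (hβbar ▸ min_le_left βx βu))
  · exact barrier_constraint Cu du Bu hBu0 hBupos hBuconv hdu βu hβu ((traj k).1 0)
      (hBuk.trans (hβbar ▸ min_le_right βx βu))
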